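/- arXiv:2102.06379 — 2 statements merged into one kernel-verified Lean document; each statement's English description precedes it below -/
import Mathlib

section
/- Let g be a c-concave function for the cost c(x,y) = h(x-y) with h convex and differentiable. Then for every (a,b), (x,y) ∈ ∂^c g with g(a), g(x) finite, |g(x) - g(a)| ≤ |x - a| · ( |∇h(x-y)| + |∇h(a-y)| + |∇h(x-b)| + |∇h(a-b)| ). -/
open scoped Topology

/-- Gradient inequality for a convex differentiable function:
`h u - h v ≤ ⟪∇h u, u - v⟫ ≤ ‖∇h u‖ ‖u - v‖`. -/
lemma grad_ineq_aux {d : ℕ} (h : EuclideanSpace ℝ (Fin d) → ℝ)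
    (hconv : ConvexOn ℝ Set.univ h) (hdiff : Differentiable ℝ h)
    (u v : EuclideanSpace ℝ (Fin d)) :
    h u - h v ≤ ‖gradient h u‖ * ‖u - v‖ := by
  set w : EuclideanSpace ℝ (Fin d) := v - u with hw
  set φ : ℝ → ℝ := fun t => h (u + t • w) with hφ
  have hφconv : ConvexOn ℝ Set.univ φ := by
    have := hconv.comp_affineMap (AffineMap.lineMap u v : ℝ →ᵃ[ℝ] EuclideanSpace ℝ (Fin d))
    have heq : φ = h ∘ (AffineMap.lineMap u v : ℝ →ᵃ[ℝ] EuclideanSpace ℝ (Fin d)) := by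
      funext t
      simp [φ, AffineMap.lineMap_apply, hw]
      congr 1
      module
    rw [heq]
    simpa using this
  have hline : HasDerivAt (fun t : ℝ => u + t • w) w 0 := by
    have h1 : HasDerivAt (fun t : ℝ => t • w) ((1:ℝ) • w) 0 :=
      (hasDerivAt_id (0:ℝ)).smul_const w
    simpa using h1.const_add u
  have hD : HasDerivAt φ (fderiv ℝ h u w) 0 :=
    HasFDerivAt.comp_hasDerivAt (0:ℝ) (by simpa using (hdiff u).hasFDerivAt) hline
  have hslope := hφconv.le_slope_of_hasDerivAt (Set.mem_univ (0:ℝ)) (Set.mem_univ (1:ℝ))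
    zero_lt_one hD
  have hsl : slope φ 0 1 = h v - h u := by
    simp [slope, φ, hw]
  have hgr : fderiv ℝ h u w = inner ℝ (gradient h u) w := by
    have : (InnerProductSpace.toDual ℝ (EuclideanSpace ℝ (Fin d))) (gradient h u)
        = fderiv ℝ h u := by
      simp [gradient]
    rw [← this, InnerProductSpace.toDual_apply_apply]
  have h1 : (inner ℝ (gradient h u) w : ℝ) ≤ h v - h u := by
    rw [← hgr]; rw [hsl] at hslope; exact hslope
  have h2 : (inner ℝ (gradient h u) (u - v) : ℝ) ≤ ‖gradient h u‖ * ‖u - v‖ :=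
    real_inner_le_norm _ _
  have h3 : (inner ℝ (gradient h u) (u - v) : ℝ) = -(inner ℝ (gradient h u) w : ℝ) := by
    rw [hw, ← inner_neg_right]
    congr 1
    abel
  linarith

/-- For `c(x,y) = h(x-y)` with `h` convex differentiable, a `c`-concave `g` and
`(a,b), (x,y) ∈ ∂^c g` with finite values, the local Lipschitz bound
`|g(x) - g(a)| ≤ |x-a| (|∇h(x-y)| + |∇h(a-y)| + |∇h(x-b)| + |∇h(a-b)|)` holds. -/
theorem c_concave_local_lipschitz_bound {d : ℕ}
    (h : EuclideanSpace ℝ (Fin d) → ℝ)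
    (hconv : ConvexOn ℝ Set.univ h) (hdiff : Differentiable ℝ h)
    (g : EuclideanSpace ℝ (Fin d) → EReal)
    (T : Set (EuclideanSpace ℝ (Fin d) × ℝ))
    (hconc : ∀ x, g x = ⨅ p ∈ T, ((h (x - p.1) : EReal) - (p.2 : EReal)))
    (a b x y : EuclideanSpace ℝ (Fin d)) (ga gx : ℝ)
    (hga : g a = (ga : EReal)) (hgx : g x = (gx : EReal))
    (hab : ∀ z, g z ≤ g a + ((h (z - b) : EReal) - (h (a - b) : EReal)))
    (hxy : ∀ z, g z ≤ g x + ((h (z - y) : EReal) - (h (x - y) : EReal))) :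
    |gx - ga| ≤ ‖x - a‖ *
      (‖gradient h (x - y)‖ + ‖gradient h (a - y)‖ +
        ‖gradient h (x - b)‖ + ‖gradient h (a - b)‖) := by
  -- Real inequality from hab at z = x
  have hA : gx - ga ≤ h (x - b) - h (a - b) := by
    have := hab x
    rw [hgx, hga] at this
    have : (gx : EReal) ≤ ((ga + (h (x - b) - h (a - b)) : ℝ) : EReal) := by
      push_cast
      exact this
    have := EReal.coe_le_coe_iff.mp this
    linarith
  have hB : ga - gx ≤ h (a - y) - h (x - y) := by
    have := hxy a
    rw [hgx, hga] at this
    have : (ga : EReal) ≤ ((gx + (h (a - y) - h (x - y)) : ℝ) : EReal) := by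
      push_cast
      exact this
    have := EReal.coe_le_coe_iff.mp this
    linarith
  have hA' : h (x - b) - h (a - b) ≤ ‖gradient h (x - b)‖ * ‖x - a‖ := by
    have := grad_ineq_aux h hconv hdiff (x - b) (a - b)
    have he : (x - b) - (a - b) = x - a := by abel
    rwa [he] at this
  have hB' : h (a - y) - h (x - y) ≤ ‖gradient h (a - y)‖ * ‖x - a‖ := by
    have := grad_ineq_aux h hconv hdiff (a - y) (x - y)
    have he : (a - y) - (x - y) = a - x := by abel
    rw [he, norm_sub_rev] at this
    exact this
  have n1 : 0 ≤ ‖gradient h (x - y)‖ := norm_nonneg _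
  have n2 : 0 ≤ ‖gradient h (a - y)‖ := norm_nonneg _
  have n3 : 0 ≤ ‖gradient h (x - b)‖ := norm_nonneg _
  have n4 : 0 ≤ ‖gradient h (a - b)‖ := norm_nonneg _
  have nx : 0 ≤ ‖x - a‖ := norm_nonneg _
  rw [abs_sub_le_iff]
  constructor <;> nlinarith
end

section
/- (Efron–Stein inequality) Let X₁,…,X_n be independent random variables, X'₁,…,X'_n an independent copy, f a measurable function with f(X₁,…,X_n) square integrable, Z = f(X₁,…,X_n), and Z'_i = f(X₁,…,X_{i-1}, X'_i, X_{i+1},…,X_n). Then Var(Z) ≤ (1/2) Σ_{i=1}^n E[(Z - Z'_i)²] = Σ_{i=1}^n E[(Z - Z'_i)₊²]. -/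
open MeasureTheory ProbabilityTheory Finset

namespace ES

variable {α β γ : Type*} [MeasurableSpace α] [MeasurableSpace β] [MeasurableSpace γ]

lemma mp_fst {μ : Measure α} {ν : Measure β} [SigmaFinite ν] [IsProbabilityMeasure ν] :
    MeasurePreserving Prod.fst (μ.prod ν) μ :=
  ⟨measurable_fst, by rw [Measure.map_fst_prod, measure_univ, one_smul]⟩

lemma mp_snd {μ : Measure α} {ν : Measure β} [SFinite ν] [SFinite μ] [IsProbabilityMeasure μ] :
    MeasurePreserving Prod.snd (μ.prod ν) ν :=
  ⟨measurable_snd, by rw [Measure.map_snd_prod, measure_univ, one_smul]⟩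

lemma integral_comp_mp {μ : Measure α} {ν : Measure β} {φ : α → β} (hφ : MeasurePreserving φ μ ν)
    {u : β → ℝ} (hu : AEStronglyMeasurable u ν) : ∫ x, u (φ x) ∂μ = ∫ y, u y ∂ν := by
  rw [← hφ.map_eq] at hu ⊢
  exact (integral_map hφ.measurable.aemeasurable hu).symm

lemma memL2_comp_mp {μ : Measure α} {ν : Measure β} {φ : α → β} (hφ : MeasurePreserving φ μ ν)
    {u : β → ℝ} (hu : MemLp u 2 ν) : MemLp (fun x => u (φ x)) 2 μ :=
  hu.comp_measurePreserving hφ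

/-- Cauchy-Schwarz / Jensen: `(∫ g)² ≤ ∫ g²` on a probability space. -/
lemma sq_int_le {μ : Measure β} [IsProbabilityMeasure μ] {g : β → ℝ}
    (h1 : Integrable g μ) (h2 : Integrable (fun x => g x ^ 2) μ) :
    (∫ x, g x ∂μ) ^ 2 ≤ ∫ x, g x ^ 2 ∂μ := by
  set c := ∫ x, g x ∂μ with hc
  have h0 : 0 ≤ ∫ x, (g x - c) ^ 2 ∂μ := integral_nonneg fun x => sq_nonneg _
  have hsub : Integrable (fun x => g x ^ 2 - 2 * c * g x) μ := h2.sub (h1.const_mul (2 * c))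
  have e1 : (fun x => (g x - c) ^ 2) = fun x => (g x ^ 2 - 2 * c * g x) + c ^ 2 := by
    funext x; ring
  rw [e1, integral_add hsub (integrable_const _), integral_sub h2 (h1.const_mul (2 * c)),
    integral_const_mul, integral_const] at h0
  simp only [measure_univ, probReal_univ, ENNReal.toReal_one, smul_eq_mul, one_mul, ← hc] at h0
  nlinarith [h0]

/-- `∫∫ (g x - g a)² = 2 (∫ g² - (∫ g)²)` on a probability space. -/
lemma double_var {μ : Measure β} [IsProbabilityMeasure μ] {g : β → ℝ}
    (h1 : Integrable g μ) (h2 : Integrable (fun x => g x ^ 2) μ) :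
    ∫ p : β × β, (g p.1 - g p.2) ^ 2 ∂(μ.prod μ)
      = 2 * ((∫ x, g x ^ 2 ∂μ) - (∫ x, g x ∂μ) ^ 2) := by
  have i1 : Integrable (fun p : β × β => g p.1 ^ 2) (μ.prod μ) :=
    memLp_one_iff_integrable.1 ((memLp_one_iff_integrable.2 h2).comp_measurePreserving mp_fst)
  have i2 : Integrable (fun p : β × β => g p.2 ^ 2) (μ.prod μ) :=
    memLp_one_iff_integrable.1 ((memLp_one_iff_integrable.2 h2).comp_measurePreserving mp_snd)
  have i12 : Integrable (fun p : β × β => g p.1 ^ 2 + g p.2 ^ 2) (μ.prod μ) := i1.add i2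
  have i3 : Integrable (fun p : β × β => g p.1 * g p.2) (μ.prod μ) := h1.mul_prod h1
  have i3' : Integrable (fun p : β × β => 2 * (g p.1 * g p.2)) (μ.prod μ) := i3.const_mul 2
  have e1 : (fun p : β × β => (g p.1 - g p.2) ^ 2)
      = fun p => (g p.1 ^ 2 + g p.2 ^ 2) - 2 * (g p.1 * g p.2) := by funext p; ring
  rw [e1, integral_sub i12 i3', integral_add i1 i2, integral_const_mul, integral_prod_mul g g,
    integral_comp_mp mp_fst h2.1, integral_comp_mp mp_snd h2.1]
  ring

end ES

namespace ESB

variable {ι : Type*} [Fintype ι] [DecidableEq ι] {β : Type*} [MeasurableSpace β]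

lemma measurable_update_pair (i : ι) :
    Measurable (fun p : (ι → β) × β => Function.update p.1 i p.2) := by
  apply measurable_pi_lambda
  intro j
  by_cases h : j = i
  · subst h; simpa [Function.update_self] using measurable_snd
  · simp only [Function.update_of_ne h]
    exact (measurable_pi_apply j).comp measurable_fst

lemma update_mp (μ : ι → Measure β) [∀ i, IsProbabilityMeasure (μ i)] (i : ι) :
    MeasurePreserving (fun p : (ι → β) × β => Function.update p.1 i p.2)
      ((Measure.pi μ).prod (μ i)) (Measure.pi μ) := by
  refine ⟨measurable_update_pair i, ?_⟩
  refine (Measure.pi_eq fun s hs => ?_).symm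
  rw [Measure.map_apply (measurable_update_pair i) (MeasurableSet.univ_pi hs)]
  have hpre : (fun p : (ι → β) × β => Function.update p.1 i p.2) ⁻¹' Set.pi Set.univ s
      = (Set.pi Set.univ (Function.update s i Set.univ)) ×ˢ (s i) := by
    ext p
    simp only [Set.mem_preimage, Set.mem_pi, Set.mem_univ, true_implies, Set.mem_prod]
    constructor
    · intro h
      refine ⟨fun j => ?_, by simpa using h i⟩
      by_cases hj : j = i
      · subst hj; simp
      · simpa [Function.update_of_ne hj] using h j
    · rintro ⟨h1, h2⟩ j
      by_cases hj : j = i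
      · subst hj; simpa using h2
      · have := h1 j; simpa [Function.update_of_ne hj] using this
  rw [hpre, Measure.prod_prod, Measure.pi_pi]
  have h1 : ∏ j, μ j (Function.update s i Set.univ j) = ∏ j ∈ Finset.univ.erase i, μ j (s j) := by
    rw [← Finset.mul_prod_erase Finset.univ _ (Finset.mem_univ i), Function.update_self,
      measure_univ, one_mul]
    exact Finset.prod_congr rfl fun j hj => by
      rw [Function.update_of_ne (Finset.ne_of_mem_erase hj)]
  have h2 : ∏ j, μ j (s j) = μ i (s i) * ∏ j ∈ Finset.univ.erase i, μ j (s j) :=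
    (Finset.mul_prod_erase Finset.univ _ (Finset.mem_univ i)).symm
  rw [h1, h2, mul_comm]

end ESB

namespace ESB2
open ESB

variable {ι : Type*} [Fintype ι] [DecidableEq ι] {β : Type*} [MeasurableSpace β]

lemma eval_mp (μ : ι → Measure β) [∀ i, IsProbabilityMeasure (μ i)] (i : ι) :
    MeasurePreserving (fun x : ι → β => x i) (Measure.pi μ) (μ i) := by
  refine ⟨measurable_pi_apply i, ?_⟩
  ext s hs
  rw [Measure.map_apply (measurable_pi_apply i) hs]
  have hpre : (fun x : ι → β => x i) ⁻¹' s = Set.pi Set.univ (Function.update (fun _ => Set.univ) i s) := by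
    ext x
    simp only [Set.mem_preimage, Set.mem_pi, Set.mem_univ, true_implies]
    constructor
    · intro h j
      by_cases hj : j = i
      · subst hj; simpa using h
      · simp [Function.update_of_ne hj]
    · intro h; simpa using h i
  rw [hpre, Measure.pi_pi]
  rw [← Finset.mul_prod_erase Finset.univ _ (Finset.mem_univ i), Function.update_self]
  have : ∏ j ∈ Finset.univ.erase i, μ j (Function.update (fun _ => Set.univ) i s j)
      = ∏ j ∈ Finset.univ.erase i, μ j Set.univ :=
    Finset.prod_congr rfl fun j hj => by rw [Function.update_of_ne (Finset.ne_of_mem_erase hj)]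
  rw [this]
  simp [measure_univ]

lemma perm_mp (μ : ι → Measure β) [∀ i, IsProbabilityMeasure (μ i)] (σ : Equiv.Perm ι)
    (hσ : ∀ j, μ (σ j) = μ j) :
    MeasurePreserving (fun (y : ι → β) j => y (σ j)) (Measure.pi μ) (Measure.pi μ) := by
  have hmeas : Measurable (fun (y : ι → β) j => y (σ j)) :=
    measurable_pi_lambda _ fun j => measurable_pi_apply _
  refine ⟨hmeas, ?_⟩
  refine (Measure.pi_eq fun s hs => ?_).symm
  rw [Measure.map_apply hmeas (MeasurableSet.univ_pi hs)]
  have hpre : (fun (y : ι → β) j => y (σ j)) ⁻¹' Set.pi Set.univ s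
      = Set.pi Set.univ (fun j' => s (σ.symm j')) := by
    ext y
    simp only [Set.mem_preimage, Set.mem_pi, Set.mem_univ, true_implies]
    constructor
    · intro hy j'
      have := hy (σ.symm j')
      simpa using this
    · intro hy j
      have := hy (σ j)
      simpa using this
  rw [hpre, Measure.pi_pi]
  rw [← Equiv.prod_comp σ (fun j' => μ j' (s (σ.symm j')))]
  refine Finset.prod_congr rfl fun j _ => ?_
  rw [Equiv.symm_apply_apply, hσ j]

lemma joint_law_pi {Ω : Type*} [MeasurableSpace Ω] {P : Measure Ω} [IsProbabilityMeasure P]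
    (Y : ι → Ω → β) (hm : ∀ i, Measurable (Y i))
    (h : iIndepFun (m := fun _ => ‹MeasurableSpace β›) Y P) :
    Measure.map (fun ω i => Y i ω) P = Measure.pi (fun i => Measure.map (Y i) P) := by
  refine (Measure.pi_eq fun s hs => ?_).symm
  rw [Measure.map_apply (measurable_pi_lambda _ hm) (MeasurableSet.univ_pi hs)]
  have hpre : (fun ω i => Y i ω) ⁻¹' Set.pi Set.univ s = ⋂ i ∈ Finset.univ, Y i ⁻¹' s i := by
    ext ω; simp
  rw [hpre, h.measure_inter_preimage_eq_mul Finset.univ (fun i _ => hs i)]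
  exact Finset.prod_congr rfl fun i _ => (Measure.map_apply (hm i) (hs i)).symm

end ESB2

namespace ESC
open ES ESB ESB2

variable {β : Type*} [MeasurableSpace β]

lemma core : ∀ (n : ℕ) (μ : Fin n → Measure β), (∀ i, IsProbabilityMeasure (μ i)) →
    ∀ (f : (Fin n → β) → ℝ), Measurable f → MemLp f 2 (Measure.pi μ) →
    (∫ x, f x ^ 2 ∂Measure.pi μ) - (∫ x, f x ∂Measure.pi μ) ^ 2 ≤
      (1/2) * ∑ i, ∫ p : (Fin n → β) × β,
        (f p.1 - f (Function.update p.1 i p.2)) ^ 2 ∂((Measure.pi μ).prod (μ i)) := by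
  intro n
  induction n with
  | zero =>
    intro μ hprob f hf hL2
    haveI := hprob
    haveI : IsProbabilityMeasure (Measure.pi μ) := inferInstance
    have hconst : f = fun _ => f (fun i => i.elim0) :=
      funext fun x => congrArg f (Subsingleton.elim _ _)
    rw [hconst]
    simp
  | succ n ih =>
    intro μ hprob f hf hL2
    haveI := hprob
    set π := Measure.pi μ with hπ
    haveI : IsProbabilityMeasure π := inferInstance
    set ν : Fin n → Measure β := fun j => μ j.succ with hν
    haveI : ∀ j, IsProbabilityMeasure (ν j) := fun j => hprob _
    haveI : IsProbabilityMeasure (Measure.pi ν) := inferInstance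
    set e : (Fin (n+1) → β) ≃ᵐ β × (Fin n → β) :=
      MeasurableEquiv.piFinSuccAbove (fun _ => β) 0 with he
    set P := (μ 0).prod (Measure.pi ν) with hP
    have mpe : MeasurePreserving e π P := by
      have := measurePreserving_piFinSuccAbove μ 0
      exact this
    have he1 : ∀ x : Fin (n+1) → β, e x = (x 0, fun j => x j.succ) := by
      intro x
      simp only [he, MeasurableEquiv.piFinSuccAbove, Fin.insertNthEquiv, MeasurableEquiv.coe_mk,
        Equiv.coe_fn_symm_mk, Fin.removeNth]
      exact Prod.ext rfl rfl
    -- h is f read through e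
    set h : β × (Fin n → β) → ℝ := fun p => f (e.symm p) with hh_def
    have hh : Measurable h := hf.comp e.symm.measurable
    have hfe : ∀ x, f x = h (e x) := fun x => by simp [hh_def]
    have hL2h : MemLp h 2 P := by
      rw [← mpe.map_eq]
      refine (memLp_map_measure_iff hh.aestronglyMeasurable e.measurable.aemeasurable).2 ?_
      have : h ∘ e = f := funext fun x => (hfe x).symm
      rw [this]; exact hL2
    have ih1 : Integrable h P := hL2h.integrable one_le_two
    have ih2 : Integrable (fun p => h p ^ 2) P := hL2h.integrable_sq
    set m : (Fin n → β) → ℝ := fun y => ∫ x, h (x, y) ∂(μ 0) with hm_def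
    have hm_sm : StronglyMeasurable m := hh.stronglyMeasurable.integral_prod_left'
    have hm_int : Integrable m (Measure.pi ν) := ih1.integral_prod_right
    set w : (Fin n → β) → ℝ := fun y => ∫ x, h (x, y) ^ 2 ∂(μ 0) with hw_def
    have hw_int : Integrable w (Measure.pi ν) := ih2.integral_prod_right
    have hsec1 : ∀ᵐ y ∂(Measure.pi ν), Integrable (fun x => h (x, y)) (μ 0) := ih1.prod_left_ae
    have hsec2 : ∀ᵐ y ∂(Measure.pi ν), Integrable (fun x => h (x, y) ^ 2) (μ 0) := ih2.prod_left_ae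
    have hm_sq_le : ∀ᵐ y ∂(Measure.pi ν), m y ^ 2 ≤ w y := by
      filter_upwards [hsec1, hsec2] with y h1 h2
      exact sq_int_le h1 h2
    have hm2_int : Integrable (fun y => m y ^ 2) (Measure.pi ν) := by
      refine Integrable.mono' hw_int ((hm_sm.pow 2).aestronglyMeasurable) ?_
      filter_upwards [hm_sq_le] with y hy
      rw [Real.norm_of_nonneg (sq_nonneg _)]; exact hy
    have hmL2 : MemLp m 2 (Measure.pi ν) :=
      (memLp_two_iff_integrable_sq hm_sm.aestronglyMeasurable).2 hm2_int
    -- basic integral identities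
    have E1 : ∫ x, f x ∂π = ∫ y, m y ∂(Measure.pi ν) := by
      have t1 : ∫ x, f x ∂π = ∫ x, h (e x) ∂π := by simp only [hfe]
      rw [t1, integral_comp_mp mpe ih1.aestronglyMeasurable, hP, integral_prod_symm _ ih1]
    have E2 : ∫ x, f x ^ 2 ∂π = ∫ y, w y ∂(Measure.pi ν) := by
      have t1 : ∫ x, f x ^ 2 ∂π = ∫ x, h (e x) ^ 2 ∂π := by simp only [hfe]
      rw [t1, integral_comp_mp mpe ih2.aestronglyMeasurable, hP, integral_prod_symm _ ih2]
    -- Step 1 : the conditional variance term equals half of the `i = 0` term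
    set S0 : ℝ := ∫ p : (Fin (n+1) → β) × β,
        (f p.1 - f (Function.update p.1 0 p.2)) ^ 2 ∂(π.prod (μ 0)) with hS0_def
    have hupd0 : ∀ (x : Fin (n+1) → β) (a : β), e (Function.update x 0 a) = (a, (e x).2) := by
      intro x a
      rw [he1, he1]
      refine Prod.ext (by simp) ?_
      funext j
      simp [Function.update_of_ne (Fin.succ_ne_zero j)]
    have step1 : S0 = 2 * ∫ y, (w y - m y ^ 2) ∂(Measure.pi ν) := by
      -- transfer to the `P ⊗ μ 0` space
      set G : (β × (Fin n → β)) × β → ℝ := fun q => (h q.1 - h (q.2, q.1.2)) ^ 2 with hG_def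
      have hGmeas : Measurable G := by
        apply Measurable.pow_const
        exact (hh.comp measurable_fst).sub
          (hh.comp ((measurable_snd.prodMk (measurable_snd.comp measurable_fst))))
      have mp1 : MeasurePreserving (Prod.map e id) (π.prod (μ 0)) (P.prod (μ 0)) :=
        mpe.prod (MeasurePreserving.id _)
      have t1 : S0 = ∫ q, G q ∂(P.prod (μ 0)) := by
        rw [← integral_comp_mp mp1 hGmeas.aestronglyMeasurable, hS0_def]
        refine integral_congr_ae (Filter.Eventually.of_forall fun p => ?_)
        show (f p.1 - f (Function.update p.1 0 p.2)) ^ 2 = G (Prod.map (⇑e) id p)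
        rw [hfe p.1, hfe (Function.update p.1 0 p.2), hupd0 p.1 p.2]
        rfl
      -- reindex as `(pi ν) ⊗ (μ 0 ⊗ μ 0)`
      set ψ : (Fin n → β) × (β × β) → (β × (Fin n → β)) × β :=
        fun r => ((r.2.1, r.1), r.2.2) with hψ_def
      have mpψ : MeasurePreserving ψ ((Measure.pi ν).prod ((μ 0).prod (μ 0))) (P.prod (μ 0)) := by
        have c0 : MeasurePreserving (MeasurableEquiv.prodAssoc.symm)
            ((Measure.pi ν).prod ((μ 0).prod (μ 0))) (((Measure.pi ν).prod (μ 0)).prod (μ 0)) :=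
          (measurePreserving_prodAssoc (Measure.pi ν) (μ 0) (μ 0)).symm
        have c1 : MeasurePreserving (Prod.map Prod.swap (id : β → β))
            (((Measure.pi ν).prod (μ 0)).prod (μ 0)) (P.prod (μ 0)) :=
          Measure.measurePreserving_swap.prod (MeasurePreserving.id _)
        have : ψ = (Prod.map Prod.swap (id : β → β)) ∘ (MeasurableEquiv.prodAssoc.symm) := by
          funext r; rfl
        rw [this]
        exact c1.comp c0
      set F0 : (Fin n → β) × (β × β) → ℝ :=
        fun r => (h (r.2.1, r.1) - h (r.2.2, r.1)) ^ 2 with hF0_def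
      have t2 : ∫ q, G q ∂(P.prod (μ 0))
          = ∫ r, F0 r ∂((Measure.pi ν).prod ((μ 0).prod (μ 0))) := by
        rw [← integral_comp_mp mpψ hGmeas.aestronglyMeasurable]
      -- integrability of F0
      have mpφ1 : MeasurePreserving (fun r : (Fin n → β) × (β × β) => (r.2.1, r.1))
          ((Measure.pi ν).prod ((μ 0).prod (μ 0))) P := by
        have c2 : MeasurePreserving (Prod.map (id : (Fin n → β) → _) (Prod.fst : β × β → β))
            ((Measure.pi ν).prod ((μ 0).prod (μ 0))) ((Measure.pi ν).prod (μ 0)) :=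
          (MeasurePreserving.id _).prod mp_fst
        exact Measure.measurePreserving_swap.comp c2
      have mpφ2 : MeasurePreserving (fun r : (Fin n → β) × (β × β) => (r.2.2, r.1))
          ((Measure.pi ν).prod ((μ 0).prod (μ 0))) P := by
        have c2 : MeasurePreserving (Prod.map (id : (Fin n → β) → _) (Prod.snd : β × β → β))
            ((Measure.pi ν).prod ((μ 0).prod (μ 0))) ((Measure.pi ν).prod (μ 0)) :=
          (MeasurePreserving.id _).prod mp_snd
        exact Measure.measurePreserving_swap.comp c2
      have iF0 : Integrable F0 ((Measure.pi ν).prod ((μ 0).prod (μ 0))) :=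
        ((memL2_comp_mp mpφ1 hL2h).sub (memL2_comp_mp mpφ2 hL2h)).integrable_sq
      have t3 : ∫ r, F0 r ∂((Measure.pi ν).prod ((μ 0).prod (μ 0)))
          = ∫ y, ∫ q : β × β, (h (q.1, y) - h (q.2, y)) ^ 2 ∂((μ 0).prod (μ 0))
              ∂(Measure.pi ν) := integral_prod _ iF0
      have t4 : ∫ y, ∫ q : β × β, (h (q.1, y) - h (q.2, y)) ^ 2 ∂((μ 0).prod (μ 0))
          ∂(Measure.pi ν) = ∫ y, 2 * (w y - m y ^ 2) ∂(Measure.pi ν) := by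
        refine integral_congr_ae ?_
        filter_upwards [hsec1, hsec2] with y h1 h2
        exact double_var h1 h2
      rw [t1, t2, t3, t4, integral_const_mul]
    -- Step 2 : per-coordinate Jensen bound
    have step2 : ∀ j : Fin n,
        (∫ q : (Fin n → β) × β, (m q.1 - m (Function.update q.1 j q.2)) ^ 2
            ∂((Measure.pi ν).prod (ν j)))
          ≤ ∫ p : (Fin (n+1) → β) × β,
            (f p.1 - f (Function.update p.1 j.succ p.2)) ^ 2 ∂(π.prod (μ j.succ)) := by
      intro j
      set Q := (Measure.pi ν).prod (ν j) with hQ_def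
      have hupdj : ∀ (x : Fin (n+1) → β) (a : β),
          e (Function.update x j.succ a) = ((e x).1, Function.update (e x).2 j a) := by
        intro x a
        rw [he1, he1]
        refine Prod.ext (by simp [Function.update_of_ne (Fin.succ_ne_zero j).symm]) ?_
        funext k
        by_cases hk : k = j
        · subst hk; simp
        · simp [Function.update_of_ne (fun hc => hk (Fin.succ_injective _ hc)),
            Function.update_of_ne hk]
      set F2 : β × ((Fin n → β) × β) → ℝ :=
        fun r => (h (r.1, r.2.1) - h (r.1, Function.update r.2.1 j r.2.2)) ^ 2 with hF2_def
      have hF2meas : Measurable F2 := by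
        apply Measurable.pow_const
        refine (hh.comp (measurable_fst.prodMk (measurable_fst.comp measurable_snd))).sub
          (hh.comp (measurable_fst.prodMk ?_))
        exact (measurable_update_pair j).comp measurable_snd
      -- transfer of the target term
      have mp1 : MeasurePreserving (Prod.map e id) (π.prod (μ j.succ)) (P.prod (ν j)) :=
        mpe.prod (MeasurePreserving.id _)
      have mpρ : MeasurePreserving (MeasurableEquiv.prodAssoc)
          (P.prod (ν j)) ((μ 0).prod Q) := by
        rw [hP, hQ_def]
        exact measurePreserving_prodAssoc _ _ _
      have tgt1 : ∫ p : (Fin (n+1) → β) × β,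
          (f p.1 - f (Function.update p.1 j.succ p.2)) ^ 2 ∂(π.prod (μ j.succ))
            = ∫ r, F2 r ∂((μ 0).prod Q) := by
        rw [← integral_comp_mp (mpρ.comp mp1) hF2meas.aestronglyMeasurable]
        refine integral_congr_ae (Filter.Eventually.of_forall fun p => ?_)
        show (f p.1 - f (Function.update p.1 j.succ p.2)) ^ 2
          = F2 (MeasurableEquiv.prodAssoc (Prod.map (⇑e) id p))
        rw [hfe p.1, hfe (Function.update p.1 j.succ p.2), hupdj p.1 p.2]
        rfl
      -- integrability of F2
      have mpχ1 : MeasurePreserving (Prod.map (id : β → β) (Prod.fst : (Fin n → β) × β → _))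
          ((μ 0).prod Q) P := (MeasurePreserving.id _).prod mp_fst
      have mpχ2 : MeasurePreserving
          (Prod.map (id : β → β) (fun q : (Fin n → β) × β => Function.update q.1 j q.2))
          ((μ 0).prod Q) P := (MeasurePreserving.id _).prod (update_mp ν j)
      have iF2 : Integrable F2 ((μ 0).prod Q) :=
        ((memL2_comp_mp mpχ1 hL2h).sub (memL2_comp_mp mpχ2 hL2h)).integrable_sq
      have hL2u1 : MemLp (fun r : β × ((Fin n → β) × β) => h (r.1, r.2.1)) 2 ((μ 0).prod Q) :=
        memL2_comp_mp mpχ1 hL2h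
      have hL2u2 : MemLp (fun r : β × ((Fin n → β) × β) =>
          h (r.1, Function.update r.2.1 j r.2.2)) 2 ((μ 0).prod Q) := memL2_comp_mp mpχ2 hL2h
      have iu1 : Integrable (fun r : β × ((Fin n → β) × β) => h (r.1, r.2.1)) ((μ 0).prod Q) :=
        hL2u1.integrable one_le_two
      have iu2 : Integrable (fun r : β × ((Fin n → β) × β) =>
          h (r.1, Function.update r.2.1 j r.2.2)) ((μ 0).prod Q) := hL2u2.integrable one_le_two
      -- a.e. section facts
      have hs1 : ∀ᵐ q ∂Q, Integrable (fun x0 => h (x0, q.1)) (μ 0) := iu1.prod_left_ae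
      have hs2 : ∀ᵐ q ∂Q, Integrable (fun x0 => h (x0, Function.update q.1 j q.2)) (μ 0) :=
        iu2.prod_left_ae
      have hsF2 : ∀ᵐ q ∂Q, Integrable (fun x0 => F2 (x0, q)) (μ 0) := iF2.prod_left_ae
      have hptwise : ∀ᵐ q ∂Q, (m q.1 - m (Function.update q.1 j q.2)) ^ 2
          ≤ ∫ x0, F2 (x0, q) ∂(μ 0) := by
        filter_upwards [hs1, hs2, hsF2] with q h1 h2 h3
        have hd : m q.1 - m (Function.update q.1 j q.2)
            = ∫ x0, (h (x0, q.1) - h (x0, Function.update q.1 j q.2)) ∂(μ 0) :=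
          (integral_sub h1 h2).symm
        rw [hd]
        exact sq_int_le (h1.sub h2) h3
      have hRHSint : Integrable (fun q => ∫ x0, F2 (x0, q) ∂(μ 0)) Q := iF2.integral_prod_right
      have hLHSint : Integrable
          (fun q : (Fin n → β) × β => (m q.1 - m (Function.update q.1 j q.2)) ^ 2) Q := by
        refine Integrable.mono' hRHSint ?_ ?_
        · exact (((hm_sm.comp_measurable measurable_fst).sub
            (hm_sm.comp_measurable (measurable_update_pair j))).pow 2).aestronglyMeasurable
        · filter_upwards [hptwise] with q hq
          rw [Real.norm_of_nonneg (sq_nonneg _)]; exact hq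
      calc (∫ q : (Fin n → β) × β, (m q.1 - m (Function.update q.1 j q.2)) ^ 2 ∂Q)
          ≤ ∫ q, ∫ x0, F2 (x0, q) ∂(μ 0) ∂Q := integral_mono_ae hLHSint hRHSint hptwise
        _ = ∫ r, F2 r ∂((μ 0).prod Q) := (integral_prod_symm _ iF2).symm
        _ = _ := tgt1.symm
    -- Step 3 : apply the induction hypothesis to `m` and conclude
    have ihm := ih ν (fun j => hprob _) m hm_sm.measurable hmL2
    have hB : ∫ y, (w y - m y ^ 2) ∂(Measure.pi ν)
        = (∫ y, w y ∂(Measure.pi ν)) - ∫ y, m y ^ 2 ∂(Measure.pi ν) :=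
      integral_sub hw_int hm2_int
    have hsum : (∑ j : Fin n, ∫ q : (Fin n → β) × β,
          (m q.1 - m (Function.update q.1 j q.2)) ^ 2 ∂((Measure.pi ν).prod (ν j)))
        ≤ ∑ j : Fin n, ∫ p : (Fin (n+1) → β) × β,
          (f p.1 - f (Function.update p.1 j.succ p.2)) ^ 2 ∂(π.prod (μ j.succ)) :=
      Finset.sum_le_sum fun j _ => step2 j
    rw [E2, E1, Fin.sum_univ_succ]
    rw [hB] at step1
    linarith [ihm, hsum, step1]

end ESC

section Main

open ES ESB ESB2 ESC

lemma ES.max_sq_decomp (a b : ℝ) : (a - b) ^ 2 = max (a - b) 0 ^ 2 + max (b - a) 0 ^ 2 := by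
  rcases le_total a b with hab | hab
  · rw [max_eq_right (by linarith), max_eq_left (by linarith)]
    ring
  · rw [max_eq_left (by linarith), max_eq_right (by linarith)]
    ring

/-- Efron–Stein inequality: For independent `X₁,…,X_n` with independent copy
`X'₁,…,X'_n`, `Z = f(X₁,…,X_n)` and `Z'_i` obtained by replacing the `i`-th coordinate,
`Var(Z) ≤ (1/2) Σᵢ E[(Z - Z'_i)²] = Σᵢ E[(Z - Z'_i)₊²]`. -/
theorem efron_stein {n : ℕ} {β : Type*} [MeasurableSpace β]
    {Ω : Type*} [MeasureSpace Ω] [IsProbabilityMeasure (ℙ : Measure Ω)]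
    (X X' : Fin n → Ω → β)
    (hmX : ∀ i, Measurable (X i)) (hmX' : ∀ i, Measurable (X' i))
    (hindep : iIndepFun (m := fun _ => ‹MeasurableSpace β›) (Sum.elim X X') ℙ)
    (hid : ∀ i, Measure.map (X' i) ℙ = Measure.map (X i) ℙ)
    (f : (Fin n → β) → ℝ) (hf : Measurable f)
    (Z : Ω → ℝ) (hZ : Z = fun ω => f (fun i => X i ω))
    (Z' : Fin n → Ω → ℝ)
    (hZ' : ∀ i, Z' i = fun ω => f (Function.update (fun j => X j ω) i (X' i ω)))
    (hZL2 : MemLp Z 2 ℙ) (hZ'L2 : ∀ i, MemLp (Z' i) 2 ℙ) :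
    variance Z ℙ ≤ (1 / 2) * ∑ i, ∫ ω, (Z ω - Z' i ω) ^ 2 ∂ℙ ∧
    (1 / 2) * ∑ i, ∫ ω, (Z ω - Z' i ω) ^ 2 ∂ℙ =
      ∑ i, ∫ ω, (max (Z ω - Z' i ω) 0) ^ 2 ∂ℙ := by
  classical
  -- setup
  set μ : Fin n → Measure β := fun i => Measure.map (X i) ℙ with hμ_def
  haveI : ∀ i, IsProbabilityMeasure (μ i) :=
    fun i => Measure.isProbabilityMeasure_map (hmX i).aemeasurable
  set κ : Fin n ⊕ Fin n → Measure β := Sum.elim μ μ with hκ_def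
  haveI : ∀ j, IsProbabilityMeasure (κ j) := fun j => by cases j <;> simp [hκ_def] <;> infer_instance
  have hmY : ∀ j, Measurable (Sum.elim X X' j) := fun j => by
    cases j with
    | inl i => exact hmX i
    | inr i => exact hmX' i
  set T : Ω → (Fin n ⊕ Fin n) → β := fun ω j => Sum.elim X X' j ω with hT_def
  have hmT : Measurable T := measurable_pi_lambda _ hmY
  have hTlaw : Measure.map T ℙ = Measure.pi κ := by
    rw [joint_law_pi (Sum.elim X X') hmY hindep]
    congr 1
    funext j
    cases j with
    | inl i => rfl
    | inr i => exact hid i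
  have mpT : MeasurePreserving T ℙ (Measure.pi κ) := ⟨hmT, hTlaw⟩
  haveI : IsProbabilityMeasure (Measure.pi κ) := inferInstance
  -- the functions on the product space
  set g : ((Fin n ⊕ Fin n) → β) → ℝ := fun y => f (fun i => y (.inl i)) with hg_def
  set g' : Fin n → ((Fin n ⊕ Fin n) → β) → ℝ :=
    fun i y => f (Function.update (fun j => y (.inl j)) i (y (.inr i))) with hg'_def
  have hmg : Measurable g :=
    hf.comp (measurable_pi_lambda _ fun i => measurable_pi_apply _)
  have hmg' : ∀ i, Measurable (g' i) := by
    intro i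
    apply hf.comp
    have : (fun y : (Fin n ⊕ Fin n) → β =>
        Function.update (fun j => y (.inl j)) i (y (.inr i)))
        = (fun p : (Fin n → β) × β => Function.update p.1 i p.2)
          ∘ (fun y => (fun j => y (.inl j), y (.inr i))) := rfl
    rw [this]
    exact (measurable_update_pair i).comp
      ((measurable_pi_lambda _ fun j => measurable_pi_apply _).prodMk (measurable_pi_apply _))
  have hZg : Z = fun ω => g (T ω) := hZ
  have hZ'g : ∀ i, Z' i = fun ω => g' i (T ω) := hZ'
  have hgL2 : MemLp g 2 (Measure.pi κ) := by
    rw [← hTlaw]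
    refine (memLp_map_measure_iff hmg.aestronglyMeasurable hmT.aemeasurable).2 ?_
    have hge : g ∘ T = Z := by rw [hZg]; rfl
    rw [hge]; exact hZL2
  have hg'L2 : ∀ i, MemLp (g' i) 2 (Measure.pi κ) := by
    intro i
    rw [← hTlaw]
    refine (memLp_map_measure_iff (hmg' i).aestronglyMeasurable hmT.aemeasurable).2 ?_
    have hge : g' i ∘ T = Z' i := by rw [hZ'g i]; rfl
    rw [hge]; exact hZ'L2 i
  -- transfer of the integrals to the product space
  have Etrans : ∀ i, ∫ ω, (Z ω - Z' i ω) ^ 2 ∂ℙ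
      = ∫ y, (g y - g' i y) ^ 2 ∂(Measure.pi κ) := by
    intro i
    rw [hZg, hZ'g i]
    exact integral_comp_mp mpT (((hmg.sub (hmg' i)).pow_const 2).aestronglyMeasurable)
  have Etrans' : ∀ i, ∫ ω, (max (Z ω - Z' i ω) 0) ^ 2 ∂ℙ
      = ∫ y, (max (g y - g' i y) 0) ^ 2 ∂(Measure.pi κ) := by
    intro i
    rw [hZg, hZ'g i]
    exact integral_comp_mp mpT
      ((((hmg.sub (hmg' i)).max measurable_const).pow_const 2).aestronglyMeasurable)
  -- the doubling identity via the swap of coordinates `inl i` and `inr i`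
  have double_i : ∀ i, ∫ ω, (Z ω - Z' i ω) ^ 2 ∂ℙ
      = 2 * ∫ ω, (max (Z ω - Z' i ω) 0) ^ 2 ∂ℙ := by
    intro i
    set σ : ((Fin n ⊕ Fin n) → β) → ((Fin n ⊕ Fin n) → β) :=
      fun y j => y (Equiv.swap (Sum.inl i) (Sum.inr i) j) with hσ_def
    have hκswap : ∀ j, κ (Equiv.swap (Sum.inl i) (Sum.inr i) j) = κ j := by
      intro j
      by_cases h1 : j = Sum.inl i
      · subst h1; rw [Equiv.swap_apply_left]; simp [hκ_def]
      · by_cases h2 : j = Sum.inr i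
        · subst h2; rw [Equiv.swap_apply_right]; simp [hκ_def]
        · rw [Equiv.swap_apply_of_ne_of_ne h1 h2]
    have hswap_mp : MeasurePreserving σ (Measure.pi κ) (Measure.pi κ) :=
      perm_mp κ (Equiv.swap (Sum.inl i) (Sum.inr i)) hκswap
    have hinner : ∀ y : (Fin n ⊕ Fin n) → β,
        (fun k => y (Equiv.swap (Sum.inl i) (Sum.inr i) (Sum.inl k)))
          = Function.update (fun j => y (Sum.inl j)) i (y (Sum.inr i)) := by
      intro y
      funext k
      by_cases hk : k = i
      · subst hk; rw [Equiv.swap_apply_left, Function.update_self]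
      · rw [Equiv.swap_apply_of_ne_of_ne (fun hc => hk (Sum.inl.inj hc)) (fun hc => Sum.inl_ne_inr hc),
          Function.update_of_ne hk]
    have hgs : ∀ y, g (σ y) = g' i y := by
      intro y
      show f (fun k => y (Equiv.swap (Sum.inl i) (Sum.inr i) (Sum.inl k))) = g' i y
      rw [hinner y]
    have hg's : ∀ y, g' i (σ y) = g y := by
      intro y
      show f (Function.update (fun j => y (Equiv.swap (Sum.inl i) (Sum.inr i) (Sum.inl j))) i
        (y (Equiv.swap (Sum.inl i) (Sum.inr i) (Sum.inr i)))) = g y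
      rw [hinner y, Equiv.swap_apply_right, Function.update_idem, Function.update_eq_self]
    have hd2 : MemLp (fun y => g y - g' i y) 2 (Measure.pi κ) := hgL2.sub (hg'L2 i)
    have id2 : Integrable (fun y => (g y - g' i y) ^ 2) (Measure.pi κ) := hd2.integrable_sq
    have ip : Integrable (fun y => max (g y - g' i y) 0 ^ 2) (Measure.pi κ) := by
      refine Integrable.mono' id2
        ((((hmg.sub (hmg' i)).max measurable_const).pow_const 2).aestronglyMeasurable) ?_
      refine Filter.Eventually.of_forall fun y => ?_
      rw [Real.norm_of_nonneg (sq_nonneg _)]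
      rcases le_total (g y - g' i y) 0 with hy | hy
      · rw [max_eq_right hy]; simpa using sq_nonneg (g y - g' i y)
      · rw [max_eq_left hy]
    have im : Integrable (fun y => max (g' i y - g y) 0 ^ 2) (Measure.pi κ) := by
      refine Integrable.mono' id2
        (((((hmg' i).sub hmg).max measurable_const).pow_const 2).aestronglyMeasurable) ?_
      refine Filter.Eventually.of_forall fun y => ?_
      rw [Real.norm_of_nonneg (sq_nonneg _)]
      rcases le_total (g' i y - g y) 0 with hy | hy
      · rw [max_eq_right hy]; simpa using sq_nonneg (g y - g' i y)
      · rw [max_eq_left hy]; nlinarith [sq_nonneg (g y - g' i y), sq_nonneg (g' i y - g y)]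
    have key : ∫ y, max (g y - g' i y) 0 ^ 2 ∂(Measure.pi κ)
        = ∫ y, max (g' i y - g y) 0 ^ 2 ∂(Measure.pi κ) := by
      have hcomp := integral_comp_mp (u := fun y => max (g y - g' i y) 0 ^ 2) hswap_mp
        ((((hmg.sub (hmg' i)).max measurable_const).pow_const 2).aestronglyMeasurable
          : AEStronglyMeasurable (fun y => max (g y - g' i y) 0 ^ 2) (Measure.pi κ))
      rw [← hcomp]
      refine integral_congr_ae (Filter.Eventually.of_forall fun y => ?_)
      show max (g (σ y) - g' i (σ y)) 0 ^ 2 = max (g' i y - g y) 0 ^ 2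
      rw [hgs y, hg's y]
    have hsplit : ∫ y, (g y - g' i y) ^ 2 ∂(Measure.pi κ)
        = (∫ y, max (g y - g' i y) 0 ^ 2 ∂(Measure.pi κ))
          + ∫ y, max (g' i y - g y) 0 ^ 2 ∂(Measure.pi κ) := by
      rw [← integral_add ip im]
      exact integral_congr_ae (Filter.Eventually.of_forall fun y => ES.max_sq_decomp _ _)
    rw [Etrans i, Etrans' i, hsplit, key]
    ring
  have eq_part : (1 / 2) * ∑ i, ∫ ω, (Z ω - Z' i ω) ^ 2 ∂ℙ
      = ∑ i, ∫ ω, (max (Z ω - Z' i ω) 0) ^ 2 ∂ℙ := by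
    rw [Finset.sum_congr rfl fun i _ => double_i i, ← Finset.mul_sum]
    ring
  refine ⟨?_, eq_part⟩
  -- the inequality, via the tensorization inequality on the product space
  set q : ((Fin n ⊕ Fin n) → β) ≃ᵐ (Fin n → β) × (Fin n → β) :=
    MeasurableEquiv.sumPiEquivProdPi (fun _ => β) with hq_def
  have mpq : MeasurePreserving q (Measure.pi κ) ((Measure.pi μ).prod (Measure.pi μ)) := by
    have := measurePreserving_sumPiEquivProdPi (X := fun _ : Fin n ⊕ Fin n => β) κ
    exact this
  have mppr : MeasurePreserving (fun y : (Fin n ⊕ Fin n) → β => fun i => y (Sum.inl i))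
      (Measure.pi κ) (Measure.pi μ) := by
    have := (mp_fst (μ := Measure.pi μ) (ν := Measure.pi μ)).comp mpq
    exact this
  have hfL2 : MemLp f 2 (Measure.pi μ) := by
    rw [← mppr.map_eq]
    refine (memLp_map_measure_iff hf.aestronglyMeasurable mppr.measurable.aemeasurable).2 ?_
    exact hgL2
  have core_app := ESC.core n μ (fun i => inferInstance) f hf hfL2
  -- identify the integrals
  have V1 : ∫ ω, Z ω ∂ℙ = ∫ x, f x ∂(Measure.pi μ) := by
    rw [hZg, integral_comp_mp mpT hmg.aestronglyMeasurable,
      ← integral_comp_mp mppr hf.aestronglyMeasurable]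
  have V2 : ∫ ω, Z ω ^ 2 ∂ℙ = ∫ x, f x ^ 2 ∂(Measure.pi μ) := by
    rw [hZg]
    rw [integral_comp_mp mpT ((hmg.pow_const 2).aestronglyMeasurable :
      AEStronglyMeasurable (fun y => g y ^ 2) (Measure.pi κ))]
    rw [← integral_comp_mp mppr ((hf.pow_const 2).aestronglyMeasurable :
      AEStronglyMeasurable (fun x => f x ^ 2) (Measure.pi μ))]
  have hvar : variance Z ℙ = ∫ ω, Z ω ^ 2 ∂ℙ - (∫ ω, Z ω ∂ℙ) ^ 2 := by
    rw [variance_eq_sub hZL2]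
    congr 1
  -- identify the right-hand side terms
  have Cterm : ∀ i, ∫ p : (Fin n → β) × β,
      (f p.1 - f (Function.update p.1 i p.2)) ^ 2 ∂((Measure.pi μ).prod (μ i))
        = ∫ ω, (Z ω - Z' i ω) ^ 2 ∂ℙ := by
    intro i
    have mpri : MeasurePreserving
        (fun y : (Fin n ⊕ Fin n) → β => ((fun k => y (Sum.inl k)), y (Sum.inr i)))
        (Measure.pi κ) ((Measure.pi μ).prod (μ i)) := by
      have c1 : MeasurePreserving (Prod.map (id : (Fin n → β) → _) (fun x : Fin n → β => x i))
          ((Measure.pi μ).prod (Measure.pi μ)) ((Measure.pi μ).prod (μ i)) :=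
        (MeasurePreserving.id _).prod (eval_mp μ i)
      exact c1.comp mpq
    rw [Etrans i]
    have hmint : Measurable
        (fun p : (Fin n → β) × β => (f p.1 - f (Function.update p.1 i p.2)) ^ 2) := by
      apply Measurable.pow_const
      exact (hf.comp measurable_fst).sub
        (hf.comp ((measurable_update_pair i).comp (measurable_fst.prodMk measurable_snd)))
    rw [← integral_comp_mp mpri hmint.aestronglyMeasurable]
  rw [hvar, V2, V1, Finset.sum_congr rfl fun i (_ : i ∈ Finset.univ) => (Cterm i).symm]
  exact core_app

end Main
end
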